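/- Let u : ℝ × ℝⁿ → ℂ be a Schwartz function and let e^{-ε|D_t|²/(2τ)} be the Fourier multiplier in the t-variable with symbol e^{-ε|ξ_t|²/(2τ)}, for ε, τ > 0. Then e^{-ε|D_t|²/(2τ)}(t u) = (t + i ε D_t/τ) e^{-ε|D_t|²/(2τ)} u, where D_t = (1/i)∂_t. -/

import Mathlib

open FourierTransform MeasureTheory Complex

/-- The Fourier multiplier `e^{-ε|D_t|²/(2τ)}` in one variable, with `D_t = (1/i)∂_t`,
implemented via the Fourier transform `𝓕 v (ξ) = ∫ e^{-2πi tξ} v(t) dt`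
(so the symbol is evaluated at the angular frequency `2πξ`). -/
noncomputable def gaussMult (ε τ : ℝ) (v : ℝ → ℂ) : ℝ → ℂ :=
  𝓕⁻ fun ξ : ℝ => ((Real.exp (-(ε * (2 * Real.pi * ξ) ^ 2) / (2 * τ)) : ℝ) : ℂ) * 𝓕 v ξ

lemma fourier_const_mul (c : ℂ) (f : ℝ → ℂ) (ξ : ℝ) :
    𝓕 (fun s => c * f s) ξ = c * 𝓕 f ξ := by
  rw [Real.fourier_eq, Real.fourier_eq, ← integral_const_mul]
  congr 1; funext s
  simp only [Circle.smul_def, smul_eq_mul]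
  ring

lemma fourier_add99 {f g : ℝ → ℂ} (hf : Integrable f) (hg : Integrable g) (ξ : ℝ) :
    𝓕 (fun s => f s + g s) ξ = 𝓕 f ξ + 𝓕 g ξ := by
  have h := VectorFourier.fourierIntegral_add (V := ℝ) (W := ℝ) (L := innerₗ ℝ)
      Real.continuous_fourierChar continuous_inner hf hg
  have h2 : (fun s => f s + g s) = f + g := rfl
  rw [h2]
  exact congrFun h ξ

lemma neg_two_pi_I_ne_zero : (-(2 * (Real.pi : ℂ) * Complex.I)) ≠ 0 := by
  simp [Real.pi_ne_zero, Complex.I_ne_zero]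

lemma fourier_mul_self {f : ℝ → ℂ} (hf : Integrable f)
    (hf' : Integrable (fun s : ℝ => s • f s)) (ξ : ℝ) :
    𝓕 (fun s : ℝ => (s : ℂ) * f s) ξ = (-(2 * (Real.pi : ℂ) * Complex.I))⁻¹ * deriv (𝓕 f) ξ := by
  have h := (Real.hasDerivAt_fourier hf hf' ξ).deriv
  have h2 : (fun s : ℝ => (-2 * (Real.pi : ℂ) * Complex.I * s) • f s)
      = fun s : ℝ => (-(2 * (Real.pi : ℂ) * Complex.I)) * ((s : ℂ) * f s) := by
    funext s; rw [smul_eq_mul]; ring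
  rw [h2, fourier_const_mul] at h
  rw [h, ← mul_assoc, inv_mul_cancel₀ neg_two_pi_I_ne_zero, one_mul]

/-- Commutation of the Fourier multiplier `e^{-ε|D_t|²/(2τ)}` with multiplication by `t`:
`e^{-ε|D_t|²/(2τ)}(t u) = (t + iε D_t/τ) e^{-ε|D_t|²/(2τ)} u`. -/
theorem stmt_11 {d : ℕ} (u : SchwartzMap (ℝ × (Fin d → ℝ)) ℂ) (ε τ : ℝ)
    (hε : 0 < ε) (hτ : 0 < τ) (t : ℝ) (x : Fin d → ℝ) :
    gaussMult ε τ (fun s => (s : ℂ) * u (s, x)) t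
      = (t : ℂ) * gaussMult ε τ (fun s => u (s, x)) t
        + Complex.I * ((ε / τ : ℝ) : ℂ) *
            ((Complex.I)⁻¹ * deriv (gaussMult ε τ fun s => u (s, x)) t) := by
  -- the slice as a Schwartz function
  have hgt : Function.HasTemperateGrowth (fun s : ℝ => ((s, x) : ℝ × (Fin d → ℝ))) := by
    apply Function.HasTemperateGrowth.of_fderiv (k := 1) (C := 1 + ‖x‖)
    · have hfd : (fderiv ℝ (fun s : ℝ => ((s, x) : ℝ × (Fin d → ℝ))))
          = fun _ => (ContinuousLinearMap.id ℝ ℝ).prod (0 : ℝ →L[ℝ] (Fin d → ℝ)) := by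
        funext s
        exact ((hasFDerivAt_id s).prodMk (hasFDerivAt_const x s)).fderiv
      rw [hfd]
      exact Function.HasTemperateGrowth.const _
    · exact fun s => (differentiableAt_id).prodMk (differentiableAt_const x)
    · intro s
      have h1 : ‖((s, x) : ℝ × (Fin d → ℝ))‖ = max ‖s‖ ‖x‖ := rfl
      rw [h1, pow_one]
      have h2 : (0:ℝ) ≤ ‖s‖ := norm_nonneg _
      have h3 : (0:ℝ) ≤ ‖x‖ := norm_nonneg _
      rcases max_cases ‖s‖ ‖x‖ with ⟨h, _⟩ | ⟨h, _⟩ <;> rw [h] <;> nlinarith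
  have hup : ∃ (k : ℕ) (C : ℝ), ∀ s : ℝ,
      ‖s‖ ≤ C * (1 + ‖((s, x) : ℝ × (Fin d → ℝ))‖) ^ k := by
    refine ⟨1, 1, fun s => ?_⟩
    have h1 : ‖((s, x) : ℝ × (Fin d → ℝ))‖ = max ‖s‖ ‖x‖ := rfl
    have h2 : ‖s‖ ≤ max ‖s‖ ‖x‖ := le_max_left _ _
    have h3 : (0:ℝ) ≤ ‖x‖ := norm_nonneg _
    rw [h1, pow_one, one_mul]
    rcases max_cases ‖s‖ ‖x‖ with ⟨h, _⟩ | ⟨h, _⟩ <;> rw [h] <;> [linarith; linarith]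
  set V : SchwartzMap ℝ ℂ := SchwartzMap.compCLM ℝ hgt hup u with hVdef
  have hVcoe : ∀ s : ℝ, V s = u (s, x) := fun s => rfl
  set F : SchwartzMap ℝ ℂ := SchwartzMap.fourierTransformCLM ℝ V with hFdef
  have hF : ⇑F = 𝓕 ⇑V := rfl
  set c : ℝ := ε * (2 * Real.pi) ^ 2 / (2 * τ) with hc
  have hcpos : 0 < c := by positivity
  set m : ℝ → ℂ := fun ξ => ((Real.exp (-(c * ξ ^ 2)) : ℝ) : ℂ) with hm
  -- rewriting gaussMult
  have hgm : ∀ w : ℝ → ℂ, gaussMult ε τ w = 𝓕⁻ (fun ξ => m ξ * 𝓕 w ξ) := by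
    intro w
    unfold gaussMult
    refine congrArg _ (funext fun ξ => ?_)
    have h : -(ε * (2 * Real.pi * ξ) ^ 2) / (2 * τ) = -(c * ξ ^ 2) := by rw [hc]; ring
    rw [h]
  set G : ℝ → ℂ := fun ξ => m ξ * F ξ with hG
  -- basic facts about m
  have hm_cont : Continuous m :=
    Complex.continuous_ofReal.comp (Real.continuous_exp.comp
      ((continuous_const.mul (continuous_pow 2)).neg))
  have hm_bound : ∀ ξ : ℝ, ‖m ξ‖ ≤ 1 := by
    intro ξ
    rw [hm]
    simp only [Complex.norm_real, Real.norm_eq_abs, Real.abs_exp]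
    rw [Real.exp_le_one_iff]
    nlinarith [sq_nonneg ξ]
  have hm_deriv : ∀ ξ : ℝ, HasDerivAt m (((-(2 * c * ξ) : ℝ) : ℂ) * m ξ) ξ := by
    intro ξ
    have h1 : HasDerivAt (fun ξ : ℝ => -(c * ξ ^ 2)) (-(2 * c * ξ)) ξ := by
      have := ((hasDerivAt_pow 2 ξ).const_mul c).neg
      exact this.congr_deriv (by push_cast; ring)
    have h2 := (h1.exp).ofReal_comp
    rw [hm]
    convert h2 using 1
    push_cast
    ring
  -- integrability facts
  have hVint : Integrable ⇑V := V.integrable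
  have hsVint : Integrable (fun s : ℝ => s • V s) := by
    apply (V.integrable_pow_mul volume 1).mono'
      ((continuous_id.smul V.continuous).aestronglyMeasurable)
    filter_upwards with s
    simp [norm_smul]
  have hF1int : Integrable (fun ξ : ℝ => ‖ξ‖ * ‖F ξ‖) := by
    simpa using F.integrable_pow_mul volume 1
  have hGint : Integrable G := by
    apply (F.integrable.norm).mono' ((hm_cont.mul F.continuous).aestronglyMeasurable)
    filter_upwards with ξ
    simp only [Pi.mul_apply, norm_mul]
    exact mul_le_of_le_one_left (norm_nonneg _) (hm_bound ξ)
  have hxGint : Integrable (fun ξ : ℝ => ξ • G ξ) := by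
    apply hF1int.mono'
      ((continuous_id.smul (hm_cont.mul F.continuous)).aestronglyMeasurable)
    filter_upwards with ξ
    show ‖ξ • (m ξ * F ξ)‖ ≤ ‖ξ‖ * ‖F ξ‖
    simp only [norm_smul, norm_mul]
    have := hm_bound ξ
    have h0 : (0:ℝ) ≤ ‖F ξ‖ := norm_nonneg _
    have h1 : (0:ℝ) ≤ ‖ξ‖ := norm_nonneg _
    calc ‖ξ‖ * (‖m ξ‖ * ‖F ξ‖) ≤ ‖ξ‖ * (1 * ‖F ξ‖) := by
          apply mul_le_mul_of_nonneg_left _ h1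
          exact mul_le_mul_of_nonneg_right (hm_bound ξ) h0
      _ = ‖ξ‖ * ‖F ξ‖ := by ring
  -- derivative of F and G
  have hFd : ∀ ξ : ℝ, HasDerivAt ⇑F (deriv ⇑F ξ) ξ := fun ξ =>
    F.differentiableAt.hasDerivAt
  have hGd : ∀ ξ : ℝ, HasDerivAt G
      (((-(2 * c * ξ) : ℝ) : ℂ) * m ξ * F ξ + m ξ * deriv ⇑F ξ) ξ := fun ξ =>
    (hm_deriv ξ).mul (hFd ξ)
  have hderivGfun : deriv G = fun ξ =>
      ((-(2 * c * ξ) : ℝ) : ℂ) * m ξ * F ξ + m ξ * deriv ⇑F ξ :=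
    funext fun ξ => (hGd ξ).deriv
  have hderivG : ∀ ξ : ℝ, deriv G ξ =
      ((-(2 * c * ξ) : ℝ) : ℂ) * m ξ * F ξ + m ξ * deriv ⇑F ξ :=
    fun ξ => (hGd ξ).deriv
  have hGdiff : Differentiable ℝ G := fun ξ => (hGd ξ).differentiableAt
  have hFderCont : Continuous (deriv ⇑F) := by
    have : ⇑(SchwartzMap.derivCLM ℝ ℂ F) = deriv ⇑F := funext fun ξ =>
      SchwartzMap.derivCLM_apply ℝ F ξ
    rw [← this]
    exact (SchwartzMap.derivCLM ℝ ℂ F).continuous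
  have hFderInt : Integrable (deriv ⇑F) := by
    have : ⇑(SchwartzMap.derivCLM ℝ ℂ F) = deriv ⇑F := funext fun ξ =>
      SchwartzMap.derivCLM_apply ℝ F ξ
    rw [← this]
    exact (SchwartzMap.derivCLM ℝ ℂ F).integrable
  have hG'int : Integrable (deriv G) := by
    rw [hderivGfun]
    apply Integrable.add
    · have ha1 : AEStronglyMeasurable (fun ξ : ℝ => ((-(2 * c * ξ) : ℝ) : ℂ)) volume :=
        (Complex.continuous_ofReal.comp ((continuous_const.mul continuous_id).neg)).aestronglyMeasurable
      apply ((hF1int.const_mul (2 * c)).mono'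
        ((ha1.mul hm_cont.aestronglyMeasurable).mul F.continuous.aestronglyMeasurable))
      filter_upwards with ξ
      simp only [Pi.mul_apply]
      rw [norm_mul, norm_mul]
      have h0 : (0:ℝ) ≤ ‖F ξ‖ := norm_nonneg _
      have h2 : ‖((-(2 * c * ξ) : ℝ) : ℂ)‖ ≤ 2 * c * ‖ξ‖ := by
        rw [Complex.norm_real, Real.norm_eq_abs, abs_neg, abs_mul, abs_mul]
        simp [abs_of_pos hcpos, Real.norm_eq_abs]
      calc ‖((-(2 * c * ξ) : ℝ) : ℂ)‖ * ‖m ξ‖ * ‖F ξ‖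
          ≤ (2 * c * ‖ξ‖) * 1 * ‖F ξ‖ := by
            apply mul_le_mul _ le_rfl h0 (by positivity)
            exact mul_le_mul h2 (hm_bound ξ) (norm_nonneg _) (by positivity)
        _ = 2 * c * (‖ξ‖ * ‖F ξ‖) := by ring
    · apply (hFderInt.norm).mono' ((hm_cont.mul hFderCont).aestronglyMeasurable)
      filter_upwards with ξ
      rw [Pi.mul_apply, norm_mul]
      exact mul_le_of_le_one_left (norm_nonneg _) (hm_bound ξ)
  have h2cGint : Integrable (fun ξ : ℝ => ((2 * c * ξ : ℝ) : ℂ) * G ξ) := by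
    have : (fun ξ : ℝ => ((2 * c * ξ : ℝ) : ℂ) * G ξ)
        = fun ξ : ℝ => ((2 * c : ℝ) : ℂ) * (ξ • G ξ) := by
      funext ξ
      simp only [hG, real_smul]
      push_cast
      ring
    rw [this]
    exact hxGint.const_mul _
  -- Fourier transform of t·v in terms of deriv F
  have hA : ∀ ξ : ℝ, 𝓕 (fun s : ℝ => (s : ℂ) * V s) ξ
      = (-(2 * (Real.pi : ℂ) * Complex.I))⁻¹ * deriv ⇑F ξ := by
    intro ξ
    rw [fourier_mul_self hVint hsVint ξ, ← hF]
  -- key rewriting of the integrand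
  have key : (fun ξ : ℝ => m ξ * 𝓕 (fun s : ℝ => (s : ℂ) * V s) ξ)
      = fun ξ : ℝ => (-(2 * (Real.pi : ℂ) * Complex.I))⁻¹
          * (deriv G ξ + ((2 * c * ξ : ℝ) : ℂ) * G ξ) := by
    funext ξ
    rw [hA ξ, hderivG ξ]
    simp only [hG]
    push_cast
    ring
  -- RHS pieces
  have gm_v : gaussMult ε τ (fun s => u (s, x)) = fun r => 𝓕 G (-r) := by
    funext r
    have h1 : (fun s : ℝ => u (s, x)) = ⇑V := rfl
    rw [h1, hgm, Real.fourierInv_eq_fourier_neg]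
    congr 1
  have hFGdiff : HasDerivAt (𝓕 G) (deriv (𝓕 G) (-t)) (-t) :=
    (Real.hasDerivAt_fourier hGint hxGint (-t)).differentiableAt.hasDerivAt
  have hneg : HasDerivAt (fun r : ℝ => 𝓕 G (-r)) ((-1 : ℝ) • deriv (𝓕 G) (-t)) t :=
    hFGdiff.scomp t (hasDerivAt_neg t)
  have hderiv_gm : deriv (gaussMult ε τ fun s => u (s, x)) t = -(deriv (𝓕 G) (-t)) := by
    rw [gm_v]
    simpa using hneg.deriv
  have hgm_v_t : gaussMult ε τ (fun s => u (s, x)) t = 𝓕 G (-t) := by rw [gm_v]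
  -- deriv (𝓕 G) in terms of 𝓕 (ξ G)
  have hB : 𝓕 (fun ξ : ℝ => (ξ : ℂ) * G ξ) (-t)
      = (-(2 * (Real.pi : ℂ) * Complex.I))⁻¹ * deriv (𝓕 G) (-t) :=
    fourier_mul_self hGint hxGint (-t)
  -- LHS computation
  have hLHS : gaussMult ε τ (fun s => (s : ℂ) * u (s, x)) t
      = (-(2 * (Real.pi : ℂ) * Complex.I))⁻¹
          * ((2 * (Real.pi : ℂ) * Complex.I * (-t : ℝ)) * 𝓕 G (-t)
            + (2 * (c : ℂ)) * ((-(2 * (Real.pi : ℂ) * Complex.I))⁻¹ * deriv (𝓕 G) (-t))) := by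
    have h1 : (fun s : ℝ => (s : ℂ) * u (s, x)) = fun s : ℝ => (s : ℂ) * V s := rfl
    rw [h1, hgm, Real.fourierInv_eq_fourier_neg, key]
    rw [show (fun ξ : ℝ => (-(2 * (Real.pi : ℂ) * Complex.I))⁻¹
          * (deriv G ξ + ((2 * c * ξ : ℝ) : ℂ) * G ξ))
        = fun ξ : ℝ => (-(2 * (Real.pi : ℂ) * Complex.I))⁻¹
          * ((deriv G) ξ + (fun ξ : ℝ => ((2 * c * ξ : ℝ) : ℂ) * G ξ) ξ) from rfl]
    rw [show (𝓕 (fun ξ : ℝ => (-(2 * (Real.pi : ℂ) * Complex.I))⁻¹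
          * ((deriv G) ξ + (fun ξ : ℝ => ((2 * c * ξ : ℝ) : ℂ) * G ξ) ξ)) (-t))
        = (-(2 * (Real.pi : ℂ) * Complex.I))⁻¹
          * 𝓕 (fun ξ : ℝ => (deriv G) ξ + (fun ξ : ℝ => ((2 * c * ξ : ℝ) : ℂ) * G ξ) ξ) (-t)
        from fourier_const_mul _ _ _]
    rw [fourier_add99 hG'int h2cGint]
    congr 1
    have hd : 𝓕 (deriv G) (-t) = (2 * (Real.pi : ℂ) * Complex.I * ((-t : ℝ) : ℂ)) • 𝓕 G (-t) :=
      congrFun (Real.fourier_deriv hGint hGdiff hG'int) (-t)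
    rw [hd, smul_eq_mul]
    congr 1
    have h2 : (fun ξ : ℝ => ((2 * c * ξ : ℝ) : ℂ) * G ξ)
        = fun ξ : ℝ => (2 * (c : ℂ)) * ((ξ : ℂ) * G ξ) := by
      funext ξ; push_cast; ring
    rw [h2, fourier_const_mul, hB]
  -- final algebra
  rw [hLHS, hgm_v_t, hderiv_gm]
  have hπ : (Real.pi : ℂ) ≠ 0 := by exact_mod_cast Real.pi_ne_zero
  have hI : Complex.I ≠ 0 := Complex.I_ne_zero
  have hτ' : (τ : ℂ) ≠ 0 := by exact_mod_cast hτ.ne'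
  rw [hc]
  push_cast
  field_simp
  ring_nf
  simp only [Complex.I_sq]
  field_simp
  ring
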